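/- arXiv:math/0401205 — 2 statements merged into one kernel-verified Lean document; each statement's English description precedes it below -/
import Mathlib

section
/- Suppose A and B are bounded linear operators on ℓ²(ℕ) with ⟨e_j, A e_k⟩ = δ_{jk} − [u_{−1/2,−1}]_{j+k+1} and ⟨e_j, B e_k⟩ = δ_{jk} + [u_{1/2,−1}]_{j+k+1} for all j,k ≥ 0, i.e. A = I − H(u_{−1/2,−1}) and B = I + H(u_{1/2,−1}). Then A and B are invertible (bijective with bounded inverse) on ℓ²(ℕ). -/
set_option maxHeartbeats 1000000

open Filter MeasureTheory
open Finset intervalIntegral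
open scoped InnerProductSpace ComplexConjugate

noncomputable section

/-- ℓ²(ℕ) over ℂ. -/
abbrev l2 : Type := lp (fun _ : ℕ => ℂ) 2

/-- The `k`-th Fourier coefficient of a function on the unit circle, given as a
`2π`-periodic function of the angle: `a_k = (1/(2π)) ∫_0^{2π} f(θ) e^{-ikθ} dθ`. -/
def fc (f : ℝ → ℂ) (k : ℤ) : ℂ :=
  ((1 / (2 * Real.pi) : ℝ) : ℂ) *
    ∫ θ in (0:ℝ)..(2 * Real.pi), f θ * Complex.exp (-(Complex.I * k * θ))

/-- The standard orthonormal basis vector `e_j` of ℓ²(ℕ). -/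
def ee (j : ℕ) : l2 := lp.single 2 j 1

/-- Matrix entry `⟨e_j, A e_k⟩` of an operator on ℓ²(ℕ). -/
def ent (A : l2 →L[ℂ] l2) (j k : ℕ) : ℂ := ⟪ee j, A (ee k)⟫_ℂ

/-- The function `u_{β,−1}` on the circle: `u_{β,−1}(e^{iθ}) = exp(iβθ)` for
`−π < θ < π`; written as `exp(β · Log(e^{iθ}))`. -/
def um1 (β : ℂ) (θ : ℝ) : ℂ := Complex.exp (β * Complex.log (Complex.exp (Complex.I * θ)))

lemma pos_sum (c : ℝ) (hc : 0 < c) (s : Finset ℕ) (y : ℕ → ℂ) :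
    0 ≤ ∑ j ∈ s, ∑ k ∈ s, (conj (y j) * y k).re / (Real.pi * ((j : ℝ) + k + c)) := by
  have hπ : (0:ℝ) < Real.pi := Real.pi_pos
  -- rewrite each term as an integral
  have key : ∀ j ∈ s, ∀ k ∈ s, (conj (y j) * y k).re / (Real.pi * ((j : ℝ) + k + c))
      = (1 / Real.pi) * ∫ t in (0:ℝ)..1, (conj (y j) * y k).re * t ^ ((j : ℝ) + k + c - 1) := by
    intro j _ k _
    have hr : (-1 : ℝ) < (j : ℝ) + k + c - 1 := by
      have : (0:ℝ) ≤ (j:ℝ) + k := by positivity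
      linarith
    rw [intervalIntegral.integral_const_mul, integral_rpow (Or.inl hr)]
    have h1 : (j : ℝ) + k + c - 1 + 1 = (j : ℝ) + k + c := by ring
    have h2 : (0:ℝ) < (j : ℝ) + k + c := by
      have : (0:ℝ) ≤ (j:ℝ) + k := by positivity
      linarith
    rw [h1, Real.one_rpow, Real.zero_rpow (ne_of_gt h2)]
    field_simp
    ring
  rw [Finset.sum_congr rfl (fun j hj => Finset.sum_congr rfl (fun k hk => key j hj k hk))]
  simp only [← Finset.mul_sum]
  apply mul_nonneg (by positivity)
  -- integrability of each term
  have hint : ∀ j k : ℕ, IntervalIntegrable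
      (fun t => (conj (y j) * y k).re * t ^ ((j : ℝ) + k + c - 1)) volume 0 1 := by
    intro j k
    apply IntervalIntegrable.const_mul
    apply intervalIntegral.intervalIntegrable_rpow'
    have : (0:ℝ) ≤ (j:ℝ) + k := by positivity
    linarith
  have swap : (∫ t in (0:ℝ)..1, ∑ j ∈ s, ∑ k ∈ s,
        (conj (y j) * y k).re * t ^ ((j : ℝ) + k + c - 1))
      = ∑ j ∈ s, ∑ k ∈ s, ∫ t in (0:ℝ)..1,
        (conj (y j) * y k).re * t ^ ((j : ℝ) + k + c - 1) := by
    refine (intervalIntegral.integral_finset_sum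
      (f := fun j t => ∑ k ∈ s, (conj (y j) * y k).re * t ^ ((j : ℝ) + k + c - 1))
      (fun j _ => by
        have h2 := IntervalIntegrable.sum s (fun k _ => hint j k)
        simpa only [Finset.sum_fn] using h2)).trans ?_
    exact Finset.sum_congr rfl fun j _ => intervalIntegral.integral_finset_sum
      (fun k _ => hint j k)
  rw [← swap]
  apply intervalIntegral.integral_nonneg_of_ae_restrict (by norm_num)
  have hne : ∀ᵐ (t : ℝ), t ≠ 0 := ae_iff.mpr (by simp)
  rw [Filter.EventuallyLE, ae_restrict_iff' measurableSet_Icc]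
  filter_upwards [hne] with t htne ht'
  simp only [Pi.zero_apply]
  · have h0 : 0 < t := lt_of_le_of_ne ht'.1 (Ne.symm htne)
    have heq : ∀ j k : ℕ, (conj (y j) * y k).re * t ^ ((j : ℝ) + k + c - 1)
        = (conj (y j * (t:ℂ)^j) * (y k * (t:ℂ)^k)).re * t ^ (c - 1) := by
      intro j k
      have : t ^ ((j : ℝ) + k + c - 1) = t ^ (j:ℕ) * t ^ (k:ℕ) * t ^ (c-1) := by
        rw [← Real.rpow_natCast t j, ← Real.rpow_natCast t k, ← Real.rpow_add h0,
          ← Real.rpow_add h0]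
        ring_nf
      have h3 : conj (y j * (t:ℂ)^j) * (y k * (t:ℂ)^k)
          = ((t ^ (j:ℕ) * t ^ (k:ℕ) : ℝ) : ℂ) * (conj (y j) * y k) := by
        push_cast
        rw [map_mul, map_pow, Complex.conj_ofReal]
        ring
      rw [this, h3, Complex.re_ofReal_mul]
      ring
    have hre : ∑ j ∈ s, ∑ k ∈ s, (conj (y j * (t:ℂ)^j) * (y k * (t:ℂ)^k)).re
        = (conj (∑ j ∈ s, y j * (t:ℂ)^j) * ∑ k ∈ s, y k * (t:ℂ)^k).re := by
      rw [map_sum, Finset.sum_mul, Complex.re_sum]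
      refine Finset.sum_congr rfl fun j _ => ?_
      rw [Finset.mul_sum, Complex.re_sum]
    simp only [heq, ← Finset.sum_mul]
    rw [hre]
    apply mul_nonneg
    · rw [mul_comm, Complex.mul_conj]
      simp [Complex.normSq_nonneg]
    · exact Real.rpow_nonneg (le_of_lt h0) _

lemma fc_um1 (β : ℂ) (n : ℤ) (hβ : β - n ≠ 0) :
    fc (um1 β) n = Complex.exp ((β - n) * Real.pi * Complex.I)
        * (1 - Complex.exp (-(2 * Real.pi * β * Complex.I)))
        / ((β - n) * Complex.I * (2 * Real.pi)) := by
  have hπ : (0:ℝ) < Real.pi := Real.pi_pos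
  set c : ℂ := (β - n) * Complex.I with hcdef
  have hc : c ≠ 0 := mul_ne_zero hβ Complex.I_ne_zero
  set F : ℝ → ℂ := fun θ => um1 β θ * Complex.exp (-(Complex.I * (n:ℂ) * (θ:ℂ))) with hFdef
  have hF1 : Set.EqOn F (fun θ : ℝ => Complex.exp (c * θ)) (Set.uIcc 0 Real.pi) := by
    intro θ hθ
    rw [Set.uIcc_of_le (le_of_lt hπ)] at hθ
    have hlog : Complex.log (Complex.exp (Complex.I * θ)) = Complex.I * θ := by
      apply Complex.log_exp
      · simp only [Complex.mul_im, Complex.I_re, Complex.I_im, Complex.ofReal_re,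
          Complex.ofReal_im]
        simp
        linarith [hθ.1]
      · simp only [Complex.mul_im, Complex.I_re, Complex.I_im, Complex.ofReal_re,
          Complex.ofReal_im]
        simp
        linarith [hθ.2]
    simp only [hFdef, um1, hlog, ← Complex.exp_add]
    congr 1
    rw [hcdef]
    push_cast
    ring
  have hF2 : Set.EqOn F (fun θ : ℝ => Complex.exp (-(2 * Real.pi * β * Complex.I))
      * Complex.exp (c * θ)) (Set.Ioc Real.pi (2 * Real.pi)) := by
    intro θ hθ
    have hexp : Complex.exp (Complex.I * θ)
        = Complex.exp (Complex.I * θ - 2 * Real.pi * Complex.I) := by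
      rw [Complex.exp_sub, Complex.exp_two_pi_mul_I]
      simp
    have hlog : Complex.log (Complex.exp (Complex.I * θ))
        = Complex.I * θ - 2 * Real.pi * Complex.I := by
      rw [hexp]
      apply Complex.log_exp
      · simp only [Complex.sub_im, Complex.mul_im, Complex.I_re, Complex.I_im,
          Complex.ofReal_re, Complex.ofReal_im]
        simp
        linarith [hθ.1]
      · simp only [Complex.sub_im, Complex.mul_im, Complex.I_re, Complex.I_im,
          Complex.ofReal_re, Complex.ofReal_im]
        simp
        linarith [hθ.2]
    simp only [hFdef, um1, hlog]
    rw [← Complex.exp_add, ← Complex.exp_add]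
    congr 1
    rw [hcdef]
    push_cast
    ring
  have hcont : Continuous fun θ : ℝ => Complex.exp (c * θ) :=
    Complex.continuous_exp.comp (continuous_const.mul Complex.continuous_ofReal)
  have hsub1 : Set.Ioc (0:ℝ) Real.pi ⊆ Set.uIcc 0 Real.pi := by
    rw [Set.uIcc_of_le hπ.le]
    exact Set.Ioc_subset_Icc_self
  have hint1 : IntervalIntegrable F volume 0 Real.pi := by
    rw [intervalIntegrable_iff, Set.uIoc_of_le hπ.le]
    exact (hcont.integrableOn_Ioc).congr_fun ((hF1.symm).mono hsub1) measurableSet_Ioc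
  have hint2 : IntervalIntegrable F volume Real.pi (2 * Real.pi) := by
    rw [intervalIntegrable_iff, Set.uIoc_of_le (by linarith)]
    exact ((continuous_const.mul hcont).integrableOn_Ioc).congr_fun
      hF2.symm measurableSet_Ioc
  have e1 : ∫ θ in (0:ℝ)..Real.pi, F θ = (Complex.exp (c * Real.pi) - 1)/c := by
    rw [intervalIntegral.integral_congr hF1, integral_exp_mul_complex hc]
    norm_num
  have e2 : ∫ θ in Real.pi..(2*Real.pi), F θ
      = Complex.exp (-(2 * Real.pi * β * Complex.I))
        * ((Complex.exp (c * (2*Real.pi)) - Complex.exp (c * Real.pi))/c) := by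
    rw [intervalIntegral.integral_congr_ae (Filter.Eventually.of_forall fun θ hθ => hF2 (by
        rwa [Set.uIoc_of_le (by linarith : Real.pi ≤ 2*Real.pi)] at hθ))]
    rw [intervalIntegral.integral_const_mul, integral_exp_mul_complex hc]
    push_cast
    ring
  have hsplit := intervalIntegral.integral_add_adjacent_intervals hint1 hint2
  have key1 : Complex.exp (-(2 * (Real.pi:ℂ) * β * Complex.I))
      * Complex.exp (c * (2*(Real.pi:ℂ))) = 1 := by
    rw [← Complex.exp_add]
    rw [show -(2 * (Real.pi:ℂ) * β * Complex.I) + c * (2*(Real.pi:ℂ))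
        = ((-n : ℤ) : ℂ) * (2 * (Real.pi:ℂ) * Complex.I) by rw [hcdef]; push_cast; ring]
    exact Complex.exp_int_mul_two_pi_mul_I (-n)
  have hfc : fc (um1 β) n
      = ((1 / (2 * Real.pi) : ℝ) : ℂ) * ∫ θ in (0:ℝ)..(2*Real.pi), F θ := rfl
  rw [hfc, ← hsplit, e1, e2]
  have hE2 : Complex.exp (c * (2*(Real.pi:ℂ)))
      = (Complex.exp (-(2 * (Real.pi:ℂ) * β * Complex.I)))⁻¹ :=
    eq_inv_of_mul_eq_one_right key1
  have harg : (β - (n:ℂ)) * (Real.pi:ℂ) * Complex.I = c * (Real.pi:ℂ) := by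
    rw [hcdef]; ring
  rw [harg]
  push_cast
  rw [hE2]
  have hπc : ((Real.pi : ℂ)) ≠ 0 := by
    simpa using Real.pi_ne_zero
  field_simp [hc, Complex.exp_ne_zero]
  ring

lemma exp_half_pi : Complex.exp ((Real.pi/2 : ℝ) * Complex.I) = Complex.I := by
  rw [Complex.exp_mul_I]
  simp [← Complex.ofReal_cos, ← Complex.ofReal_sin, Real.cos_pi_div_two, Real.sin_pi_div_two]


lemma entA_val (j k : ℕ) :
    fc (um1 (-(1/2))) ((j:ℤ) + k + 1)
      = -((((-1:ℝ)^(j+k) / (Real.pi * ((j:ℝ)+(k:ℝ)+3/2)) : ℝ)) : ℂ) := by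
  have hπ : (0:ℝ) < Real.pi := Real.pi_pos
  have hval : ((-(1/2) : ℂ)) - (((j:ℤ) + k + 1 : ℤ) : ℂ)
      = -((((j:ℝ)+(k:ℝ)+3/2 : ℝ)) : ℂ) := by push_cast; ring
  have hd : (((j:ℝ)+(k:ℝ)+3/2 : ℝ)) ≠ 0 := by positivity
  have hβ : ((-(1/2) : ℂ)) - (((j:ℤ) + k + 1 : ℤ) : ℂ) ≠ 0 := by
    rw [hval]
    exact neg_ne_zero.mpr (Complex.ofReal_ne_zero.mpr hd)
  rw [fc_um1 _ _ hβ, hval]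
  have harg : -((((j:ℝ)+(k:ℝ)+3/2 : ℝ)) : ℂ) * (Real.pi : ℂ) * Complex.I
      = (((Real.pi/2 : ℝ) : ℂ) * Complex.I + ((j+k+2 : ℕ) : ℂ) * (((Real.pi : ℝ):ℂ) * Complex.I))
        + ((-(j+k+2 : ℕ) : ℤ) : ℂ) * (2 * ((Real.pi : ℝ):ℂ) * Complex.I) := by
    push_cast
    ring
  rw [harg, Complex.exp_add, Complex.exp_add, Complex.exp_nat_mul, Complex.exp_pi_mul_I,
    exp_half_pi, Complex.exp_int_mul_two_pi_mul_I]
  have harg2 : -(2 * (Real.pi : ℂ) * (-(1/2)) * Complex.I) = (Real.pi : ℂ) * Complex.I := by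
    ring
  rw [harg2, Complex.exp_pi_mul_I]
  have hpow : ((-1 : ℂ)) ^ (j + k + 2) = (-1 : ℂ) ^ (j + k) := by
    rw [pow_add]
    norm_num
  rw [hpow]
  have hπc : ((Real.pi : ℂ)) ≠ 0 := by simpa using Real.pi_ne_zero
  have hdc : ((j:ℂ)+(k:ℂ)+3/2) ≠ 0 := by
    have := Complex.ofReal_ne_zero.mpr hd
    push_cast at this
    exact this
  simp only [mul_one]
  rw [show Complex.I * (-1:ℂ)^(j+k) * (1 - -1) = Complex.I * ((-1:ℂ)^(j+k) * 2) from by ring]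
  rw [show -((((j:ℝ)+(k:ℝ)+3/2 : ℝ)) : ℂ) * Complex.I * (2 * (Real.pi:ℂ))
      = Complex.I * (-(((((j:ℝ)+(k:ℝ)+3/2 : ℝ)) : ℂ) * 2 * (Real.pi:ℂ))) from by ring]
  rw [mul_div_mul_left _ _ Complex.I_ne_zero]
  push_cast
  rw [← neg_div]
  rw [div_eq_div_iff (neg_ne_zero.mpr (mul_ne_zero (mul_ne_zero hdc two_ne_zero) hπc)) (mul_ne_zero hπc hdc)]
  ring


lemma entB_val (j k : ℕ) :
    fc (um1 (1/2)) ((j:ℤ) + k + 1)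
      = ((((-1:ℝ)^(j+k) / (Real.pi * ((j:ℝ)+(k:ℝ)+1/2)) : ℝ)) : ℂ) := by
  have hπ : (0:ℝ) < Real.pi := Real.pi_pos
  have hval : (((1/2) : ℂ)) - (((j:ℤ) + k + 1 : ℤ) : ℂ)
      = -((((j:ℝ)+(k:ℝ)+1/2 : ℝ)) : ℂ) := by push_cast; ring
  have hd : (((j:ℝ)+(k:ℝ)+1/2 : ℝ)) ≠ 0 := by positivity
  have hβ : (((1/2) : ℂ)) - (((j:ℤ) + k + 1 : ℤ) : ℂ) ≠ 0 := by
    rw [hval]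
    exact neg_ne_zero.mpr (Complex.ofReal_ne_zero.mpr hd)
  rw [fc_um1 _ _ hβ, hval]
  have harg : -((((j:ℝ)+(k:ℝ)+1/2 : ℝ)) : ℂ) * (Real.pi : ℂ) * Complex.I
      = (((Real.pi/2 : ℝ) : ℂ) * Complex.I + ((j+k+1 : ℕ) : ℂ) * (((Real.pi : ℝ):ℂ) * Complex.I))
        + ((-(j+k+1 : ℕ) : ℤ) : ℂ) * (2 * ((Real.pi : ℝ):ℂ) * Complex.I) := by
    push_cast
    ring
  rw [harg, Complex.exp_add, Complex.exp_add, Complex.exp_nat_mul, Complex.exp_pi_mul_I,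
    exp_half_pi, Complex.exp_int_mul_two_pi_mul_I]
  have harg2 : -(2 * (Real.pi : ℂ) * ((1/2)) * Complex.I) = (↑(-1 : ℤ)) * ((Real.pi : ℂ) * Complex.I) := by
    push_cast
    ring
  rw [harg2, Complex.exp_int_mul, Complex.exp_pi_mul_I]
  have hpow : ((-1 : ℂ)) ^ (j + k + 1) = -((-1 : ℂ) ^ (j + k)) := by
    rw [pow_add]
    norm_num
  rw [hpow]
  have hπc : ((Real.pi : ℂ)) ≠ 0 := by simpa using Real.pi_ne_zero
  have hdc : ((j:ℂ)+(k:ℂ)+1/2) ≠ 0 := by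
    have := Complex.ofReal_ne_zero.mpr hd
    push_cast at this
    exact this
  simp only [mul_one, zpow_neg, zpow_one, inv_neg, inv_one]
  rw [show Complex.I * -(-1:ℂ)^(j+k) * (1 - -1) = Complex.I * ((-1:ℂ)^(j+k) * (-2)) from by ring]
  rw [show -((((j:ℝ)+(k:ℝ)+1/2 : ℝ)) : ℂ) * Complex.I * (2 * (Real.pi:ℂ))
      = Complex.I * (-(((((j:ℝ)+(k:ℝ)+1/2 : ℝ)) : ℂ) * 2 * (Real.pi:ℂ))) from by ring]
  rw [mul_div_mul_left _ _ Complex.I_ne_zero]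
  push_cast
  rw [div_eq_div_iff (neg_ne_zero.mpr (mul_ne_zero (mul_ne_zero hdc two_ne_zero) hπc)) (mul_ne_zero hπc hdc)]
  ring

lemma coercive_invertible (A : l2 →L[ℂ] l2)
    (h : ∀ v : l2, ‖v‖ ^ 2 ≤ (⟪v, A v⟫_ℂ).re) :
    ∃ A' : l2 →L[ℂ] l2, A ∘L A' = 1 ∧ A' ∘L A = 1 := by
  have hb : ∀ v : l2, ‖v‖ ≤ ‖A v‖ := by
    intro v
    rcases eq_or_ne v 0 with rfl | hv
    · simp
    · have h1 : ‖v‖ ^ 2 ≤ ‖v‖ * ‖A v‖ := by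
        calc ‖v‖ ^ 2 ≤ (⟪v, A v⟫_ℂ).re := h v
        _ ≤ ‖⟪v, A v⟫_ℂ‖ := Complex.re_le_norm _
        _ ≤ ‖v‖ * ‖A v‖ := norm_inner_le_norm _ _
      have hv' : 0 < ‖v‖ := norm_pos_iff.mpr hv
      nlinarith
  have hker : LinearMap.ker (A : l2 →ₗ[ℂ] l2) = ⊥ := by
    rw [LinearMap.ker_eq_bot']
    intro v hv
    have := hb v
    rw [show A v = 0 from hv] at this
    simp at this
    exact this
  have hclosed : IsClosed (Set.range A) := by
    have anti : AntilipschitzWith 1 A :=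
      ContinuousLinearMap.antilipschitz_of_bound A (by simpa using hb)
    exact anti.isClosed_range A.uniformContinuous
  have hdense : (LinearMap.range (A : l2 →ₗ[ℂ] l2)).topologicalClosure = ⊤ := by
    rw [Submodule.topologicalClosure_eq_top_iff, Submodule.eq_bot_iff]
    intro y hy
    have h0 : ⟪A y, y⟫_ℂ = 0 := (Submodule.mem_orthogonal _ y).1 hy (A y) ⟨y, rfl⟩
    have h0' : ⟪y, A y⟫_ℂ = 0 := by
      rw [← inner_conj_symm, h0, map_zero]
    have := h y
    rw [h0'] at this
    simp at this
    exact this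
  have hrange : LinearMap.range (A : l2 →ₗ[ℂ] l2) = ⊤ := by
    have : (LinearMap.range (A : l2 →ₗ[ℂ] l2) : Set l2) = Set.range A := by
      ext x; simp [LinearMap.mem_range]
    have hcl : (LinearMap.range (A : l2 →ₗ[ℂ] l2)).topologicalClosure = LinearMap.range (A : l2 →ₗ[ℂ] l2) := by
      apply IsClosed.submodule_topologicalClosure_eq
      rw [this]; exact hclosed
    rw [← hcl]; exact hdense
  let e := ContinuousLinearEquiv.ofBijective A hker hrange
  refine ⟨e.symm.toContinuousLinearMap, ?_, ?_⟩
  · ext x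
    simp only [ContinuousLinearMap.coe_comp', Function.comp_apply,
      ContinuousLinearEquiv.coe_coe, ContinuousLinearMap.one_apply]
    have : A (e.symm x) = e (e.symm x) := by
      rw [ContinuousLinearEquiv.coeFn_ofBijective]
    rw [this, e.apply_symm_apply]
  · ext x
    simp only [ContinuousLinearMap.coe_comp', Function.comp_apply,
      ContinuousLinearEquiv.coe_coe, ContinuousLinearMap.one_apply]
    have : A x = e x := by rw [ContinuousLinearEquiv.coeFn_ofBijective]
    rw [this, e.symm_apply_apply]

lemma ee_inner (j k : ℕ) : ⟪ee j, ee k⟫_ℂ = if j = k then 1 else 0 := by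
  rw [ee, lp.inner_single_left]
  rcases eq_or_ne j k with rfl | h
  · simp [ee, lp.single_apply_self]
  · simp only [if_neg h]
    rw [show ((ee k : ∀ _ : ℕ, ℂ) j) = 0 from lp.single_apply_ne 2 k 1 h]
    simp


lemma expand_inner (A : l2 →L[ℂ] l2) (s : Finset ℕ) (x : ℕ → ℂ) :
    ⟪∑ j ∈ s, x j • ee j, A (∑ k ∈ s, x k • ee k)⟫_ℂ
      = ∑ j ∈ s, ∑ k ∈ s, conj (x j) * x k * ent A j k := by
  rw [map_sum, sum_inner]
  refine Finset.sum_congr rfl fun j _ => ?_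
  rw [inner_sum]
  refine Finset.sum_congr rfl fun k _ => ?_
  rw [A.map_smul, inner_smul_left, inner_smul_right, ent]
  ring


lemma expand_self (s : Finset ℕ) (x : ℕ → ℂ) :
    ⟪∑ j ∈ s, x j • ee j, (∑ k ∈ s, x k • ee k)⟫_ℂ
      = ∑ j ∈ s, ∑ k ∈ s, conj (x j) * x k * (if j = k then 1 else 0) := by
  rw [sum_inner]
  refine Finset.sum_congr rfl fun j _ => ?_
  rw [inner_sum]
  refine Finset.sum_congr rfl fun k _ => ?_
  rw [inner_smul_left, inner_smul_right, ee_inner]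
  ring


lemma entries_coercive (c : ℝ) (hc : 0 < c) (A : l2 →L[ℂ] l2)
    (h : ∀ j k : ℕ, ent A j k = (if j = k then 1 else 0)
      + (((-1:ℝ)^(j+k) / (Real.pi * ((j:ℝ)+(k:ℝ)+c)) : ℝ) : ℂ)) :
    ∀ v : l2, ‖v‖ ^ 2 ≤ (⟪v, A v⟫_ℂ).re := by
  -- first, finite linear combinations
  have key : ∀ (s : Finset ℕ) (x : ℕ → ℂ),
      ‖∑ j ∈ s, x j • ee j‖ ^ 2 ≤ (⟪∑ j ∈ s, x j • ee j, A (∑ k ∈ s, x k • ee k)⟫_ℂ).re := by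
    intro s x
    rw [← inner_self_eq_norm_sq (𝕜 := ℂ), expand_inner, expand_self]
    simp only [RCLike.re_to_complex]
    have hsplit : ∑ j ∈ s, ∑ k ∈ s, conj (x j) * x k * ent A j k
        = (∑ j ∈ s, ∑ k ∈ s, conj (x j) * x k * (if j = k then 1 else 0))
          + ∑ j ∈ s, ∑ k ∈ s, conj (x j) * x k
            * (((-1:ℝ)^(j+k) / (Real.pi * ((j:ℝ)+(k:ℝ)+c)) : ℝ) : ℂ) := by
      rw [← Finset.sum_add_distrib]
      refine Finset.sum_congr rfl fun j _ => ?_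
      rw [← Finset.sum_add_distrib]
      refine Finset.sum_congr rfl fun k _ => ?_
      rw [h j k]
      ring
    rw [hsplit, Complex.add_re, le_add_iff_nonneg_right]
    have hterm : ∀ j k : ℕ, (conj (x j) * x k
          * (((-1:ℝ)^(j+k) / (Real.pi * ((j:ℝ)+(k:ℝ)+c)) : ℝ) : ℂ)).re
        = (conj (((-1:ℂ)^j) * x j) * (((-1:ℂ)^k) * x k)).re
          / (Real.pi * ((j:ℝ)+(k:ℝ)+c)) := by
      intro j k
      rw [mul_comm (conj (x j) * x k), Complex.re_ofReal_mul]
      have hy : conj (((-1:ℂ)^j) * x j) * (((-1:ℂ)^k) * x k)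
          = (((-1:ℝ)^(j+k) : ℝ) : ℂ) * (conj (x j) * x k) := by
        rw [map_mul, map_pow, map_neg, map_one]
        push_cast
        rw [pow_add]
        ring
      rw [hy, Complex.re_ofReal_mul]
      ring
    simp only [Complex.re_sum, hterm]
    exact pos_sum c hc s (fun j => (-1:ℂ)^j * x j)
  -- now extend by density
  intro v
  have hsum : HasSum (fun i : ℕ => lp.single 2 i (v i)) v :=
    lp.hasSum_single ENNReal.ofNat_ne_top v
  have htend : Tendsto (fun s : Finset ℕ => ∑ i ∈ s, lp.single 2 i (v i))
      atTop (nhds v) := hsum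
  have hform : ∀ s : Finset ℕ,
      (∑ i ∈ s, lp.single 2 i (v i)) = ∑ i ∈ s, (v i) • ee i := by
    intro s
    refine Finset.sum_congr rfl fun i _ => ?_
    rw [ee, ← lp.single_smul]
    norm_num
  set F : l2 → ℝ := fun w => (⟪w, A w⟫_ℂ).re - ‖w‖^2 with hF
  have hcont : Continuous F := by
    apply Continuous.sub
    · exact Complex.continuous_re.comp (Continuous.inner continuous_id A.continuous)
    · exact continuous_norm.pow 2
  have htend2 : Tendsto (fun s : Finset ℕ => F (∑ i ∈ s, lp.single 2 i (v i)))
      atTop (nhds (F v)) := (hcont.tendsto v).comp htend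
  have hge : 0 ≤ F v := by
    refine ge_of_tendsto htend2 (Eventually.of_forall fun s => ?_)
    have := key s v
    rw [hF]
    simp only [hform s]
    linarith
  rw [hF] at hge
  simp only at hge
  linarith

/-- If `A = I − H(u_{−1/2,−1})` and `B = I + H(u_{1/2,−1})` on ℓ²(ℕ), then `A` and `B`
are invertible (bijective with bounded inverse). -/
theorem stmt2 (A B : l2 →L[ℂ] l2)
    (hA : ∀ j k : ℕ, ent A j k =
      (if j = k then 1 else 0) - fc (um1 (-(1/2))) ((j : ℤ) + k + 1))
    (hB : ∀ j k : ℕ, ent B j k =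
      (if j = k then 1 else 0) + fc (um1 (1/2)) ((j : ℤ) + k + 1)) :
    (∃ A' : l2 →L[ℂ] l2, A ∘L A' = 1 ∧ A' ∘L A = 1) ∧
    (∃ B' : l2 →L[ℂ] l2, B ∘L B' = 1 ∧ B' ∘L B = 1) := by
  constructor
  · apply coercive_invertible
    apply entries_coercive (3/2) (by norm_num)
    intro j k
    rw [hA j k, entA_val j k, sub_neg_eq_add]
  · apply coercive_invertible
    apply entries_coercive (1/2) (by norm_num)
    intro j k
    rw [hB j k, entB_val j k]

end
end

section
/- Let a : T → ℂ be even with absolutely summable Fourier coefficients and nonvanishing on T, and suppose a^{−1} (the pointwise inverse) also has absolutely summable Fourier coefficients. Let A and B be the bounded linear operators on ℓ²(ℕ) with ⟨e_j, A e_k⟩ = a_{j−k} + a_{j+k+1} and ⟨e_j, B e_k⟩ = [a^{−1}]_{j−k} + [a^{−1}]_{j+k+1} for all j,k ≥ 0 (i.e. A = T(a)+H(a) and B = T(a^{−1})+H(a^{−1})). Then A ∘ B = B ∘ A = I. -/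
open Filter MeasureTheory
open scoped InnerProductSpace

noncomputable section

lemma orth (m : ℤ) : ∫ θ in (0:ℝ)..(2*Real.pi), Complex.exp (Complex.I * m * θ) =
    if m = 0 then ((2*Real.pi : ℝ) : ℂ) else 0 := by
  by_cases hm : m = 0
  · simp [hm, Real.pi_pos.le, two_mul, Real.pi_nonneg]
  · have hc : (Complex.I * m) ≠ 0 := by
      simp [Complex.I_ne_zero, hm]
    rw [integral_exp_mul_complex hc, if_neg hm]
    have h1 : Complex.I * (m : ℂ) * ((2 * Real.pi : ℝ) : ℂ) = (m : ℂ) * (2 * Real.pi * Complex.I) := by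
      push_cast; ring
    rw [h1, Complex.exp_int_mul_two_pi_mul_I]
    simp

lemma interchange (f : ℤ → ℝ → ℂ) (hf : ∀ n, Continuous (f n)) (C : ℤ → ℝ)
    (hC : Summable C) (hC0 : ∀ n, 0 ≤ C n)
    (hb : ∀ n x, x ∈ Set.Ioc (0:ℝ) (2*Real.pi) → ‖f n x‖ ≤ C n) :
    ∫ θ in (0:ℝ)..(2*Real.pi), ∑' n, f n θ = ∑' n, ∫ θ in (0:ℝ)..(2*Real.pi), f n θ := by
  have h2π : (0:ℝ) ≤ 2*Real.pi := by positivity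
  rw [intervalIntegral.integral_of_le h2π]
  have : ∀ n, (∫ θ in (0:ℝ)..(2*Real.pi), f n θ) = ∫ θ in Set.Ioc (0:ℝ) (2*Real.pi), f n θ :=
    fun n => intervalIntegral.integral_of_le h2π
  simp_rw [this]
  apply MeasureTheory.integral_tsum
  · exact fun n => (hf n).aestronglyMeasurable
  · apply ne_top_of_le_ne_top (b := ∑' n, ENNReal.ofReal (C n) * ENNReal.ofReal (2*Real.pi))
    · rw [ENNReal.tsum_mul_right]
      apply ENNReal.mul_ne_top _ ENNReal.ofReal_ne_top
      rw [← ENNReal.ofReal_tsum_of_nonneg hC0 hC]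
      exact ENNReal.ofReal_ne_top
    · apply ENNReal.tsum_le_tsum
      intro n
      calc ∫⁻ a in Set.Ioc (0:ℝ) (2*Real.pi), ‖f n a‖₊
          ≤ ∫⁻ _ in Set.Ioc (0:ℝ) (2*Real.pi), ENNReal.ofReal (C n) := by
            apply MeasureTheory.setLIntegral_mono measurable_const
            intro x hx
            rw [← enorm_eq_nnnorm, ← ofReal_norm]
            exact ENNReal.ofReal_le_ofReal (hb n x hx)
        _ = ENNReal.ofReal (C n) * ENNReal.ofReal (2*Real.pi) := by
            rw [MeasureTheory.setLIntegral_const, Real.volume_Ioc]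
            norm_num

lemma norm_exp_I_mul (z : ℂ) (hz : z.re = 0) : ‖Complex.exp z‖ = 1 := by
  rw [Complex.norm_exp, hz, Real.exp_zero]

lemma re_I_int_mul (m : ℤ) (θ : ℝ) : (Complex.I * m * θ).re = 0 := by
  simp [Complex.mul_re, Complex.mul_im]

lemma exp_comb (n k : ℤ) (θ : ℝ) :
    Complex.exp (Complex.I * n * θ) * Complex.exp (-(Complex.I * k * θ)) =
      Complex.exp (Complex.I * ((n - k : ℤ) : ℂ) * θ) := by
  rw [← Complex.exp_add]; congr 1; push_cast; ring

lemma twopi_ne : ((2 * Real.pi : ℝ) : ℂ) ≠ 0 := by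
  simp [Real.pi_ne_zero]

lemma fc_eq (c : ℤ → ℂ) (hc : Summable fun k => ‖c k‖)
    (a : ℝ → ℂ)
    (ha : ∀ θ : ℝ, a θ = ∑' k : ℤ, c k * Complex.exp (Complex.I * k * θ)) (k : ℤ) :
    fc a k = c k := by
  have hint : ∀ θ : ℝ, a θ * Complex.exp (-(Complex.I * k * θ)) =
      ∑' n : ℤ, c n * Complex.exp (Complex.I * ((n - k : ℤ) : ℂ) * θ) := by
    intro θ
    rw [ha θ, ← tsum_mul_right]
    exact tsum_congr fun n => by rw [mul_assoc, exp_comb]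
  rw [fc]
  simp_rw [hint]
  rw [interchange _ (fun n => by continuity) (fun n => ‖c n‖) hc (fun n => norm_nonneg _)
    (fun n x _ => by
      rw [norm_mul, norm_exp_I_mul _ (re_I_int_mul _ _), mul_one])]
  have : ∀ n : ℤ, (∫ θ in (0:ℝ)..(2*Real.pi), c n * Complex.exp (Complex.I * ((n - k : ℤ) : ℂ) * θ))
      = if n = k then c k * ((2*Real.pi:ℝ):ℂ) else 0 := by
    intro n
    rw [intervalIntegral.integral_const_mul, orth]
    by_cases h : n = k <;> simp [h, sub_eq_zero]
  simp_rw [this, tsum_ite_eq]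
  rw [← mul_assoc, mul_comm (((1 / (2 * Real.pi) : ℝ) : ℂ)) (c k), mul_assoc]
  rw [show (((1 / (2 * Real.pi) : ℝ) : ℂ)) * ((2*Real.pi:ℝ):ℂ) = 1 by
    rw [← Complex.ofReal_mul]; rw [one_div, inv_mul_cancel₀ (by positivity : (2*Real.pi:ℝ) ≠ 0)]
    simp]
  rw [mul_one]
variable {c : ℤ → ℂ} {a : ℝ → ℂ}

lemma cont_a (hc : Summable fun k => ‖c k‖)
    (ha : ∀ θ : ℝ, a θ = ∑' k : ℤ, c k * Complex.exp (Complex.I * k * θ)) :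
    Continuous a := by
  have : a = fun θ : ℝ => ∑' k : ℤ, c k * Complex.exp (Complex.I * k * θ) := funext ha
  rw [this]
  apply continuous_tsum (fun n => by continuity) hc
  intro n x
  rw [norm_mul, norm_exp_I_mul _ (re_I_int_mul _ _), mul_one]

lemma refl_a (hc : Summable fun k => ‖c k‖)
    (ha : ∀ θ : ℝ, a θ = ∑' k : ℤ, c k * Complex.exp (Complex.I * k * θ))
    (heven : ∀ k : ℤ, c k = c (-k)) (θ : ℝ) : a (2 * Real.pi - θ) = a θ := by
  rw [ha, ha]
  have h1 : ∀ k : ℤ, c k * Complex.exp (Complex.I * k * ((2 * Real.pi - θ : ℝ) : ℂ)) =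
      c k * Complex.exp (Complex.I * (-k : ℤ) * θ) := by
    intro k
    congr 1
    rw [show Complex.I * k * ((2 * Real.pi - θ : ℝ) : ℂ) =
      (k : ℂ) * (2 * Real.pi * Complex.I) + Complex.I * ((-k : ℤ) : ℂ) * θ by push_cast; ring]
    rw [Complex.exp_add, Complex.exp_int_mul_two_pi_mul_I, one_mul]
  rw [tsum_congr h1]
  have h2 : ∀ k : ℤ, c k * Complex.exp (Complex.I * ((-k : ℤ) : ℂ) * θ)
      = (fun m : ℤ => c m * Complex.exp (Complex.I * (m : ℂ) * θ)) (-k) := by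
    intro k; simp only; rw [heven k]
  rw [tsum_congr h2]
  simpa using (Equiv.neg ℤ).tsum_eq (fun m : ℤ => c m * Complex.exp (Complex.I * (m : ℂ) * θ))

lemma fc_even {g : ℝ → ℂ} (hg : ∀ θ, g (2 * Real.pi - θ) = g θ) (k : ℤ) :
    fc g (-k) = fc g k := by
  rw [fc, fc]
  congr 1
  have key : ∀ θ : ℝ, g θ * Complex.exp (-(Complex.I * ((-k : ℤ) : ℂ) * θ)) =
      (fun u : ℝ => g u * Complex.exp (-(Complex.I * k * u))) (2 * Real.pi - θ) := by
    intro θ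
    simp only
    rw [hg θ]
    congr 1
    rw [show -(Complex.I * (k:ℂ) * ((2 * Real.pi - θ : ℝ):ℂ)) =
      ((-k : ℤ) : ℂ) * (2 * Real.pi * Complex.I) + -(Complex.I * ((-k : ℤ):ℂ) * θ) by
        push_cast; ring]
    rw [Complex.exp_add, Complex.exp_int_mul_two_pi_mul_I, one_mul]
  simp_rw [key]
  rw [intervalIntegral.integral_comp_sub_left
    (fun u : ℝ => g u * Complex.exp (-(Complex.I * k * u))) (2 * Real.pi)]
  norm_num
variable {c : ℤ → ℂ} {a : ℝ → ℂ}

lemma fc_mul (hc : Summable fun k => ‖c k‖)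
    (ha : ∀ θ : ℝ, a θ = ∑' k : ℤ, c k * Complex.exp (Complex.I * k * θ))
    (g : ℝ → ℂ) (hg : Continuous g) (n : ℤ) :
    fc (fun θ => a θ * g θ) n = ∑' m : ℤ, c m * fc g (n - m) := by
  obtain ⟨x0, _, hx0⟩ := (isCompact_Icc (a := (0:ℝ)) (b := 2*Real.pi)).exists_isMaxOn
    (Set.nonempty_Icc.mpr (by positivity)) hg.norm.continuousOn
  set M := ‖g x0‖ with hM
  have hMnn : 0 ≤ M := norm_nonneg _
  have hbound : ∀ x ∈ Set.Icc (0:ℝ) (2*Real.pi), ‖g x‖ ≤ M := fun x hx => hx0 hx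
  have hint : ∀ θ : ℝ, a θ * g θ * Complex.exp (-(Complex.I * n * θ)) =
      ∑' m : ℤ, c m * (g θ * Complex.exp (-(Complex.I * ((n - m : ℤ) : ℂ) * θ))) := by
    intro θ
    rw [ha θ]
    rw [show (∑' k : ℤ, c k * Complex.exp (Complex.I * k * θ)) * g θ *
        Complex.exp (-(Complex.I * n * θ)) =
        (∑' k : ℤ, c k * Complex.exp (Complex.I * k * θ)) *
        (Complex.exp (-(Complex.I * n * θ)) * g θ) by ring]
    rw [← tsum_mul_right]
    refine tsum_congr fun m => ?_
    have hexp : Complex.exp (Complex.I * m * θ) * Complex.exp (-(Complex.I * n * θ)) =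
        Complex.exp (-(Complex.I * ((n - m : ℤ) : ℂ) * θ)) := by
      rw [← Complex.exp_add]; congr 1; push_cast; ring
    rw [mul_assoc]
    congr 1
    rw [← mul_assoc, hexp, mul_comm]
  have int_fc : ∀ k : ℤ, (∫ θ in (0:ℝ)..(2*Real.pi),
      g θ * Complex.exp (-(Complex.I * (k : ℂ) * θ))) = ((2*Real.pi:ℝ):ℂ) * fc g k := by
    intro k
    rw [fc, ← mul_assoc, show ((2*Real.pi:ℝ):ℂ) * (((1 / (2 * Real.pi) : ℝ)) : ℂ) = 1 by
      rw [← Complex.ofReal_mul]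
      rw [show (2*Real.pi) * (1 / (2 * Real.pi)) = 1 by
        field_simp]
      simp, one_mul]
  rw [fc]
  simp_rw [hint]
  rw [interchange _ (fun m => by continuity) (fun m => ‖c m‖ * M) (hc.mul_right M)
    (fun m => mul_nonneg (norm_nonneg _) hMnn)
    (fun m x hx => by
      rw [norm_mul, norm_mul, norm_exp_I_mul, mul_one]
      · exact mul_le_mul_of_nonneg_left (hbound x (Set.Ioc_subset_Icc_self hx)) (norm_nonneg _)
      · have : (-(Complex.I * ((n - m : ℤ) : ℂ) * (x:ℂ))).re = -((Complex.I * ((n-m:ℤ):ℂ) * (x:ℂ)).re) := by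
          simp
        rw [this, re_I_int_mul, neg_zero])]
  have step : ∀ m : ℤ, (∫ θ in (0:ℝ)..(2*Real.pi),
      c m * (g θ * Complex.exp (-(Complex.I * ((n - m : ℤ) : ℂ) * θ)))) =
      ((2*Real.pi:ℝ):ℂ) * (c m * fc g (n - m)) := by
    intro m
    rw [intervalIntegral.integral_const_mul, int_fc (n - m)]
    ring
  simp_rw [step]
  rw [tsum_mul_left, ← mul_assoc, show (((1 / (2 * Real.pi) : ℝ)) : ℂ) * ((2*Real.pi:ℝ):ℂ) = 1 by
    rw [← Complex.ofReal_mul, show (1 / (2 * Real.pi)) * (2*Real.pi) = 1 by field_simp]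
    simp, one_mul]

lemma fc_one (n : ℤ) : fc (fun _ => (1:ℂ)) n = if n = 0 then 1 else 0 := by
  have : ∀ θ : ℝ, (1:ℂ) * Complex.exp (-(Complex.I * (n:ℂ) * θ)) =
      Complex.exp (Complex.I * ((-n : ℤ):ℂ) * θ) := by
    intro θ
    rw [one_mul]
    congr 1
    push_cast; ring
  rw [fc]
  simp_rw [this]
  rw [orth]
  by_cases h : n = 0
  · simp only [h, neg_zero]
    simp only [if_true]
    rw [← Complex.ofReal_mul,
      show (1 / (2 * Real.pi)) * (2*Real.pi) = 1 by field_simp]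
    simp
  · simp [h]

lemma summable_shift {u v : ℤ → ℂ} (hu : Summable fun n => ‖u n‖)
    (hv : Summable fun n => ‖v n‖) (p q : ℤ) :
    Summable (fun m : ℤ => u (p - m) * v (m + q)) := by
  have hvq : Summable fun m : ℤ => ‖v (m + q)‖ := by
    have := (Equiv.addRight q).summable_iff (f := fun m : ℤ => ‖v m‖)
    rw [← this] at hv
    exact hv
  have hU : ∀ n : ℤ, ‖u n‖ ≤ ∑' n, ‖u n‖ := fun n => Summable.le_tsum hu n (fun _ _ => norm_nonneg _)
  apply Summable.of_norm_bounded (g := fun m => (∑' n, ‖u n‖) * ‖v (m + q)‖) (hvq.mul_left _)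
  intro m
  rw [norm_mul]
  exact mul_le_mul_of_nonneg_right (hU _) (norm_nonneg _)

lemma key {u v : ℤ → ℂ} (hu : Summable fun n => ‖u n‖) (hv : Summable fun n => ‖v n‖)
    (hve : ∀ n : ℤ, v (-n) = v n)
    (hconv : ∀ n : ℤ, ∑' m : ℤ, u m * v (n - m) = if n = 0 then 1 else 0)
    (j k : ℕ) :
    ∑' m : ℕ, (u ((j:ℤ) - m) + u ((j:ℤ) + m + 1)) * (v ((m:ℤ) - k) + v ((m:ℤ) + k + 1)) =
      if j = k then 1 else 0 := by
  -- the two ℤ-indexed families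
  set f1 : ℤ → ℂ := fun m => u ((j:ℤ) - m) * v (m - k) with hf1def
  set f2 : ℤ → ℂ := fun m => u ((j:ℤ) - m) * v (m + (k + 1)) with hf2def
  have hs1 : Summable f1 := by
    have h := summable_shift hu hv (j:ℤ) (-(k:ℤ))
    exact h.congr fun m => by rw [hf1def, ← sub_eq_add_neg]
  have hs2 : Summable f2 := summable_shift hu hv (j:ℤ) ((k:ℤ)+1)
  -- ℤ-sums via hconv
  have conv1 : ∑' m : ℤ, f1 m = if j = k then 1 else 0 := by
    have e := (Equiv.subLeft (j:ℤ)).tsum_eq (fun w => u w * v (((j:ℤ) - (k:ℤ)) - w))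
    simp only [Equiv.subLeft_apply] at e
    have : ∀ m : ℤ, f1 m = u ((j:ℤ) - m) * v (((j:ℤ) - (k:ℤ)) - ((j:ℤ) - m)) := by
      intro m; simp only [f1]; congr 2; ring
    rw [tsum_congr this, e, hconv]
    by_cases h : j = k
    · simp [h]
    · rw [if_neg (by omega), if_neg h]
  have conv2 : ∑' m : ℤ, f2 m = 0 := by
    have e := (Equiv.subLeft (j:ℤ)).tsum_eq (fun w => u w * v (((j:ℤ) + (k:ℤ) + 1) - w))
    simp only [Equiv.subLeft_apply] at e
    have : ∀ m : ℤ, f2 m = u ((j:ℤ) - m) * v (((j:ℤ) + (k:ℤ) + 1) - ((j:ℤ) - m)) := by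
      intro m; simp only [f2]; congr 2; ring
    rw [tsum_congr this, e, hconv, if_neg (by omega)]
  -- split the ℤ-sums into ℕ-sums
  have split1 : ∑' m : ℕ, (f1 (m:ℤ) + f1 (-((m:ℤ) + 1))) = if j = k then 1 else 0 := by
    rw [tsum_nat_add_neg_add_one hs1, conv1]
  have split2 : ∑' m : ℕ, (f2 (m:ℤ) + f2 (-((m:ℤ) + 1))) = 0 := by
    rw [tsum_nat_add_neg_add_one hs2, conv2]
  -- identify terms
  have t1a : ∀ m : ℕ, f1 (m:ℤ) = u ((j:ℤ) - m) * v ((m:ℤ) - k) := fun m => rfl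
  have t1b : ∀ m : ℕ, f1 (-((m:ℤ) + 1)) = u ((j:ℤ) + m + 1) * v ((m:ℤ) + k + 1) := by
    intro m
    have h1 : f1 (-((m:ℤ)+1)) = u ((j:ℤ) - (-((m:ℤ)+1))) * v ((-((m:ℤ)+1)) - k) := rfl
    rw [h1, show (j:ℤ) - (-((m:ℤ)+1)) = (j:ℤ) + m + 1 by ring,
      show (-((m:ℤ)+1)) - (k:ℤ) = -((m:ℤ) + k + 1) by ring, hve]
  have t2a : ∀ m : ℕ, f2 (m:ℤ) = u ((j:ℤ) - m) * v ((m:ℤ) + k + 1) := by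
    intro m
    have h1 : f2 (m:ℤ) = u ((j:ℤ) - m) * v ((m:ℤ) + ((k:ℤ)+1)) := rfl
    rw [h1, show (m:ℤ) + ((k:ℤ)+1) = (m:ℤ) + k + 1 by ring]
  have t2b : ∀ m : ℕ, f2 (-((m:ℤ) + 1)) = u ((j:ℤ) + m + 1) * v ((m:ℤ) - k) := by
    intro m
    have h1 : f2 (-((m:ℤ)+1)) = u ((j:ℤ) - (-((m:ℤ)+1))) * v ((-((m:ℤ)+1)) + ((k:ℤ)+1)) := rfl
    rw [h1, show (j:ℤ) - (-((m:ℤ)+1)) = (j:ℤ) + m + 1 by ring,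
      show (-((m:ℤ)+1)) + ((k:ℤ) + 1) = -((m:ℤ) - k) by ring, hve]
  -- combine
  have hsum1 : Summable fun m : ℕ => f1 (m:ℤ) + f1 (-((m:ℤ) + 1)) := hs1.nat_add_neg_add_one
  have hsum2 : Summable fun m : ℕ => f2 (m:ℤ) + f2 (-((m:ℤ) + 1)) := hs2.nat_add_neg_add_one
  have expand : ∀ m : ℕ, (u ((j:ℤ) - m) + u ((j:ℤ) + m + 1)) * (v ((m:ℤ) - k) + v ((m:ℤ) + k + 1))
      = (f1 (m:ℤ) + f1 (-((m:ℤ) + 1))) + (f2 (m:ℤ) + f2 (-((m:ℤ) + 1))) := by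
    intro m
    rw [t1a, t1b, t2a, t2b]
    ring
  rw [tsum_congr expand, Summable.tsum_add hsum1 hsum2, split1, split2, add_zero]

def bb : HilbertBasis ℕ ℂ l2 := HilbertBasis.ofRepr (LinearIsometryEquiv.refl ℂ l2)

lemma bb_eq (i : ℕ) : bb i = ee i := (bb.repr_symm_single i).symm.trans rfl

lemma inner_ee (m : ℕ) (x : l2) : ⟪ee m, x⟫_ℂ = x m := by
  rw [ee, lp.inner_single_left]
  simp [RCLike.inner_apply]

lemma op_ext {A B : l2 →L[ℂ] l2} (h : ∀ j k : ℕ, ent A j k = ent B j k) : A = B := by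
  apply ContinuousLinearMap.ext_on (s := Set.range ee)
  · rw [Submodule.dense_iff_topologicalClosure_eq_top, ← funext bb_eq]
    exact bb.dense_span
  · rintro _ ⟨k, rfl⟩
    apply lp.ext
    funext m
    rw [← inner_ee m (A (ee k)), ← inner_ee m (B (ee k))]
    exact h m k

lemma ent_comp (A B : l2 →L[ℂ] l2) (j k : ℕ) :
    ent (A ∘L B) j k = ∑' m : ℕ, ent A j m * ent B m k := by
  rw [ent, ContinuousLinearMap.comp_apply,
    ← ContinuousLinearMap.adjoint_inner_left A (B (ee k)) (ee j),
    ← bb.tsum_inner_mul_inner]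
  exact tsum_congr fun m => by
    rw [show (bb m : l2) = ee m from bb_eq m, ContinuousLinearMap.adjoint_inner_left]; rfl

lemma ent_one (j k : ℕ) : ent 1 j k = if j = k then 1 else 0 := by
  rw [ent, ContinuousLinearMap.one_apply, inner_ee, ee, lp.single_apply]
  simp [Pi.single_apply, eq_comm]

/-- If `a` is even, nonvanishing, with absolutely summable Fourier coefficients, and the
pointwise inverse `a⁻¹` also has absolutely summable Fourier coefficients, then for the
operators `A = T(a) + H(a)` and `B = T(a⁻¹) + H(a⁻¹)` on ℓ²(ℕ) one has
`A ∘ B = B ∘ A = I`. -/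
theorem stmt12 (c : ℤ → ℂ) (hc : Summable fun k => ‖c k‖)
    (a : ℝ → ℂ)
    (ha : ∀ θ : ℝ, a θ = ∑' k : ℤ, c k * Complex.exp (Complex.I * k * θ))
    (heven : ∀ k : ℤ, c k = c (-k))
    (hnz : ∀ θ : ℝ, a θ ≠ 0)
    (hinv : Summable fun k : ℤ => ‖fc (fun θ => (a θ)⁻¹) k‖)
    (A B : l2 →L[ℂ] l2)
    (hA : ∀ j k : ℕ, ent A j k = fc a ((j : ℤ) - k) + fc a ((j : ℤ) + k + 1))
    (hB : ∀ j k : ℕ, ent B j k =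
      fc (fun θ => (a θ)⁻¹) ((j : ℤ) - k) + fc (fun θ => (a θ)⁻¹) ((j : ℤ) + k + 1)) :
    A ∘L B = 1 ∧ B ∘L A = 1 := by
  set s : ℤ → ℂ := fun k => fc (fun θ => (a θ)⁻¹) k with hsdef
  have hfa : ∀ k : ℤ, fc a k = c k := fc_eq c hc a ha
  have hga : Continuous a := cont_a hc ha
  have hg : Continuous fun θ => (a θ)⁻¹ := hga.inv₀ hnz
  have hseven : ∀ n : ℤ, s (-n) = s n := by
    intro n
    apply fc_even
    intro θ
    rw [refl_a hc ha heven θ]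
  have hceven : ∀ n : ℤ, c (-n) = c n := fun n => (heven n).symm
  have hconv_cs : ∀ n : ℤ, ∑' m : ℤ, c m * s (n - m) = if n = 0 then 1 else 0 := by
    intro n
    have hmul := fc_mul hc ha _ hg n
    have heq : (fun θ => a θ * (a θ)⁻¹) = fun _ : ℝ => (1:ℂ) :=
      funext fun θ => mul_inv_cancel₀ (hnz θ)
    rw [heq, fc_one] at hmul
    exact hmul.symm
  have hconv_sc : ∀ n : ℤ, ∑' m : ℤ, s m * c (n - m) = if n = 0 then 1 else 0 := by
    intro n
    rw [← (Equiv.subLeft n).tsum_eq (fun m => s m * c (n - m))]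
    simp only [Equiv.subLeft_apply]
    rw [tsum_congr (fun w : ℤ => by
      rw [show n - (n - w) = w by ring, mul_comm] :
      ∀ w : ℤ, s (n - w) * c (n - (n - w)) = c w * s (n - w))]
    exact hconv_cs n
  have entA : ∀ j k : ℕ, ent A j k = c ((j:ℤ) - k) + c ((j:ℤ) + k + 1) := by
    intro j k; rw [hA, hfa, hfa]
  constructor
  · apply op_ext
    intro j k
    rw [ent_comp, ent_one]
    rw [tsum_congr (fun m : ℕ => by rw [entA, hB] :
      ∀ m : ℕ, ent A j m * ent B m k =
        (c ((j:ℤ) - m) + c ((j:ℤ) + m + 1)) * (s ((m:ℤ) - k) + s ((m:ℤ) + k + 1)))]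
    exact key hc hinv hseven hconv_cs j k
  · apply op_ext
    intro j k
    rw [ent_comp, ent_one]
    rw [tsum_congr (fun m : ℕ => by rw [entA, hB] :
      ∀ m : ℕ, ent B j m * ent A m k =
        (s ((j:ℤ) - m) + s ((j:ℤ) + m + 1)) * (c ((m:ℤ) - k) + c ((m:ℤ) + k + 1)))]
    exact key hinv hc hceven hconv_sc j k

end
end
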